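/- If the fractal function f_λ ∈ B is continuous on [a,b], then for each l = 0, …, N−2 the matching condition λ_l(b) − λ_{l+1}(a) = s_{l+1}·λ_0(a)/(1 − s_0) − s_l·λ_{N-1}(b)/(1 − s_{N-1}) holds. -/

import Mathlib

/-- The affine map `u_l : [a,b] → [x_l, x_{l+1}]` with `u_l a = x_l`, `u_l b = x_{l+1}`. -/
noncomputable def uMap (a b : ℝ) (x : ℕ → ℝ) (l : ℕ) (t : ℝ) : ℝ :=
  x l + ((x (l + 1) - x l) / (b - a)) * (t - a)

/-- `f` is bounded on the set `Ω`. -/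
def BddOn (f : ℝ → ℝ) (Ω : Set ℝ) : Prop := ∃ C, ∀ t ∈ Ω, |f t| ≤ C

/-- `f` satisfies the self-referential (fixed point of the Read–Bajraktarević operator)
equation `f(y) = s_l f(u_l⁻¹ y) + λ_l(u_l⁻¹ y)` on each piece `[x_l, x_{l+1})`
(`v l` denotes `u_l⁻¹`), together with `f(b) = s_{N-1} f(b) + λ_{N-1}(b)`. -/
def SelfRef (a b : ℝ) (N : ℕ) (x : ℕ → ℝ) (v : ℕ → ℝ → ℝ) (s : ℕ → ℝ)
    (lam : ℕ → ℝ → ℝ) (f : ℝ → ℝ) : Prop :=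
  (∀ l < N, ∀ y ∈ Set.Ico (x l) (x (l + 1)), f y = s l * f (v l y) + lam l (v l y)) ∧
  f b = s (N - 1) * f b + lam (N - 1) b

/-- If the fractal function `f_λ` is continuous on `[a,b]`, then the matching
conditions `λ_l(b) - λ_{l+1}(a) = s_{l+1} λ₀(a)/(1-s₀) - s_l λ_{N-1}(b)/(1-s_{N-1})`
hold for `l = 0, …, N-2`. -/
theorem stmt9 (a b : ℝ) (hab : a < b) (N : ℕ) (hN : 2 ≤ N)
    (x : ℕ → ℝ) (hx0 : x 0 = a) (hxN : x N = b)
    (hxmono : ∀ l < N, x l < x (l + 1))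
    (v : ℕ → ℝ → ℝ) (hv : ∀ l < N, ∀ t : ℝ, v l (uMap a b x l t) = t)
    (s : ℕ → ℝ) (hs : ∀ l < N, |s l| < 1)
    (lam : ℕ → ℝ → ℝ) (hlamc : ∀ l < N, ContinuousOn (lam l) (Set.Icc a b))
    (f : ℝ → ℝ) (hfb : BddOn f (Set.Icc a b))
    (hf : SelfRef a b N x v s lam f)
    (hfc : ContinuousOn f (Set.Icc a b)) :
    ∀ l : ℕ, l + 1 < N →
      lam l b - lam (l + 1) a =
        s (l + 1) * (lam 0 a / (1 - s 0)) - s l * (lam (N - 1) b / (1 - s (N - 1))) := by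
  have hba : b - a ≠ 0 := sub_ne_zero.mpr hab.ne'
  -- uMap at endpoints
  have huA : ∀ l, uMap a b x l a = x l := by
    intro l; simp [uMap]
  have huB : ∀ l, uMap a b x l b = x (l + 1) := by
    intro l; simp only [uMap, div_mul_cancel₀ _ hba]; ring
  -- x is between a and b
  have hxmono' : ∀ i j, i ≤ j → j ≤ N → x i ≤ x j := by
    intro i j hij hjN
    induction j with
    | zero => simp_all
    | succ n ih =>
      rcases Nat.lt_succ_iff_lt_or_eq.mp (Nat.lt_succ_of_le hij) with h | h
      · exact le_trans (ih (by omega) (by omega)) (hxmono n (by omega)).le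
      · exact le_of_eq (congrArg x h)
  have hxlow : ∀ l ≤ N, a ≤ x l := fun l hl => hx0 ▸ hxmono' 0 l (Nat.zero_le l) hl
  have hxhigh : ∀ l ≤ N, x l ≤ b := fun l hl => hxN ▸ hxmono' l N hl (le_refl N)
  -- value of f at a
  have hN0 : 0 < N := by omega
  have hs0 : 1 - s 0 ≠ 0 := by
    have := hs 0 hN0
    intro h
    rw [abs_lt] at this
    linarith [this.2]
  have hsN : 1 - s (N - 1) ≠ 0 := by
    have := hs (N - 1) (by omega)
    intro h
    rw [abs_lt] at this
    linarith [this.2]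
  have hva : v 0 a = a := by
    have := hv 0 hN0 a
    rwa [huA, hx0] at this
  have hfa : f a = lam 0 a / (1 - s 0) := by
    have hmem : a ∈ Set.Ico (x 0) (x 1) := by
      constructor
      · rw [hx0]
      · rw [← hx0]; exact hxmono 0 hN0
    have := hf.1 0 hN0 a hmem
    rw [hva] at this
    field_simp
    linarith
  have hfbv : f b = lam (N - 1) b / (1 - s (N - 1)) := by
    have := hf.2
    field_simp
    linarith
  intro l hl
  have hlN : l < N := by omega
  -- f at x (l+1) from the right
  have hvr : v (l + 1) (x (l + 1)) = a := by
    have := hv (l + 1) hl a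
    rwa [huA] at this
  have hright : f (x (l + 1)) = s (l + 1) * f a + lam (l + 1) a := by
    have hmem : x (l + 1) ∈ Set.Ico (x (l + 1)) (x (l + 1 + 1)) :=
      ⟨le_refl _, hxmono (l + 1) hl⟩
    have := hf.1 (l + 1) hl (x (l + 1)) hmem
    rwa [hvr] at this
  -- f at x (l+1) from the left: limit argument
  have hleft : f (x (l + 1)) = s l * f b + lam l b := by
    have hxl1 : x (l + 1) ∈ Set.Icc a b := ⟨hxlow _ (by omega), hxhigh _ (by omega)⟩
    have hc : 0 < (x (l + 1) - x l) / (b - a) :=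
      div_pos (sub_pos.mpr (hxmono l hlN)) (sub_pos.mpr hab)
    -- uMap maps Ico a b into Ico (x l) (x (l+1))
    have hmaps : ∀ t ∈ Set.Ico a b, uMap a b x l t ∈ Set.Ico (x l) (x (l + 1)) := by
      intro t ht
      constructor
      · have : 0 ≤ ((x (l + 1) - x l) / (b - a)) * (t - a) :=
          mul_nonneg hc.le (by linarith [ht.1])
        simp only [uMap]; linarith
      · have h2 : ((x (l + 1) - x l) / (b - a)) * (t - a)
            < ((x (l + 1) - x l) / (b - a)) * (b - a) :=
          (mul_lt_mul_iff_right₀ hc).mpr (by linarith [ht.2])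
        have h3 : ((x (l + 1) - x l) / (b - a)) * (b - a) = x (l + 1) - x l := by
          field_simp
        simp only [uMap]; linarith
    have hsub : Set.Ico (x l) (x (l + 1)) ⊆ Set.Icc a b := by
      intro y hy
      exact ⟨le_trans (hxlow l (by omega)) hy.1, le_trans hy.2.le (hxhigh (l + 1) (by omega))⟩
    have hne : (nhdsWithin b (Set.Ico a b)).NeBot := by
      apply mem_closure_iff_nhdsWithin_neBot.mp
      rw [closure_Ico hab.ne]
      exact ⟨hab.le, le_refl _⟩
    have hucont : Continuous (uMap a b x l) := by
      unfold uMap; continuity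
    have htu : Filter.Tendsto (uMap a b x l) (nhdsWithin b (Set.Ico a b))
        (nhdsWithin (x (l + 1)) (Set.Icc a b)) := by
      apply tendsto_nhdsWithin_of_tendsto_nhds_of_eventually_within
      · have h0 : Filter.Tendsto (uMap a b x l) (nhds b) (nhds (uMap a b x l b)) :=
          hucont.tendsto b
        rw [huB l] at h0
        exact h0.mono_left nhdsWithin_le_nhds
      · exact Filter.eventually_iff_exists_mem.mpr
          ⟨Set.Ico a b, self_mem_nhdsWithin, fun t ht => hsub (hmaps t ht)⟩
    have htf : Filter.Tendsto (fun t => f (uMap a b x l t)) (nhdsWithin b (Set.Ico a b))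
        (nhds (f (x (l + 1)))) := (hfc (x (l + 1)) hxl1).tendsto.comp htu
    have htg : Filter.Tendsto (fun t => s l * f t + lam l t) (nhdsWithin b (Set.Ico a b))
        (nhds (s l * f b + lam l b)) := by
      have h1 : Filter.Tendsto f (nhdsWithin b (Set.Ico a b)) (nhds (f b)) :=
        ((hfc b ⟨hab.le, le_refl _⟩).tendsto).mono_left
          (nhdsWithin_mono b Set.Ico_subset_Icc_self)
      have h2 : Filter.Tendsto (lam l) (nhdsWithin b (Set.Ico a b)) (nhds (lam l b)) :=
        ((hlamc l hlN b ⟨hab.le, le_refl _⟩).tendsto).mono_left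
          (nhdsWithin_mono b Set.Ico_subset_Icc_self)
      exact (h1.const_mul (s l)).add h2
    have heq : ∀ t ∈ Set.Ico a b, f (uMap a b x l t) = s l * f t + lam l t := by
      intro t ht
      have := hf.1 l hlN (uMap a b x l t) (hmaps t ht)
      rwa [hv l hlN t] at this
    have htf' : Filter.Tendsto (fun t => f (uMap a b x l t)) (nhdsWithin b (Set.Ico a b))
        (nhds (s l * f b + lam l b)) := by
      apply htg.congr'
      exact Filter.eventually_iff_exists_mem.mpr
        ⟨Set.Ico a b, self_mem_nhdsWithin, fun t ht => (heq t ht).symm⟩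
    exact tendsto_nhds_unique htf htf'
  rw [hfa, hfbv] at *
  linarith [hright, hleft]
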